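/- Let A ⊆ ℝ⁺ and let f : A → ℝ⁺ be subadditive in the generalized sense. Suppose 0 ∈ A, 0 is an accumulation point of A, and f(0) = 0. Then for every x ∈ A the inequality f(x) ≤ D₊f(0)·x holds (interpreted in [0,∞], so that the inequality is automatic when D₊f(0) = ∞; in particular, if D₊f(0) < ∞ then f(x) ≤ D₊f(0)·x as real numbers for all x ∈ A). -/

import Mathlib

open Filter

/-- `f` is subadditive in the generalized sense on `A`: whenever `x ∈ A` is at most the
sum of a nonempty finite family of elements of `A`, `f x` is at most the sum of the images. -/
def GenSubadditive (f : ℝ → ℝ) (A : Set ℝ) : Prop :=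
  ∀ x ∈ A, ∀ l : List ℝ, l ≠ [] → (∀ y ∈ l, y ∈ A) → x ≤ l.sum → f x ≤ (l.map f).sum

/-- The lower right Dini derivative of `f` at `x₀` over the set `A`, with values in `[0, ∞]`. -/
noncomputable def diniLower (f : ℝ → ℝ) (A : Set ℝ) (x₀ : ℝ) : ENNReal :=
  Filter.liminf (fun x => ENNReal.ofReal ((f x - f x₀) / (x - x₀)))
    (nhdsWithin x₀ (A ∩ Set.Ioi x₀))

theorem stmt18 (A : Set ℝ) (hA : A ⊆ Set.Ici 0) (f : ℝ → ℝ)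
    (hfnonneg : ∀ x ∈ A, 0 ≤ f x)
    (hsub : GenSubadditive f A)
    (h0 : (0 : ℝ) ∈ A) (hacc : AccPt (0 : ℝ) (𝓟 A)) (hf0 : f 0 = 0) :
    ∀ x ∈ A, ENNReal.ofReal (f x) ≤ diniLower f A 0 * ENNReal.ofReal x := by
  intro x hx
  rcases eq_or_lt_of_le (Set.mem_Ici.mp (hA hx)) with h | hx0
  · simp [← h, hf0]
  -- the restricted filter
  set F := nhdsWithin (0:ℝ) (A ∩ Set.Ioi 0) with hF
  have hFeq : F = nhdsWithin (0:ℝ) {(0:ℝ)}ᶜ ⊓ 𝓟 A := by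
    have hset : A ∩ Set.Ioi 0 = {(0:ℝ)}ᶜ ∩ A := by
      ext a
      constructor
      · rintro ⟨ha, ha0⟩
        exact ⟨fun h => lt_irrefl (0:ℝ) (by simpa [Set.mem_singleton_iff.mp h] using ha0), ha⟩
      · rintro ⟨ha0, ha⟩
        refine ⟨ha, Set.mem_Ioi.mpr (lt_of_le_of_ne (Set.mem_Ici.mp (hA ha)) ?_)⟩
        simpa [eq_comm] using Set.mem_compl_singleton_iff.mp ha0
    rw [hF, nhdsWithin, hset, ← inf_principal, ← inf_assoc, ← nhdsWithin]
  have hne : F.NeBot := by rw [hFeq]; exact hacc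
  -- key pointwise bound
  have key : ∀ y ∈ A ∩ Set.Ioi (0:ℝ), f x / (x + y) ≤ f y / y := by
    rintro y ⟨hyA, hy0⟩
    have hy0 : (0:ℝ) < y := hy0
    set n := ⌈x / y⌉₊ with hn
    have hnpos : 0 < n := Nat.ceil_pos.mpr (div_pos hx0 hy0)
    have hxle : x ≤ (List.replicate n y).sum := by
      rw [List.sum_replicate, nsmul_eq_mul]
      exact (div_le_iff₀ hy0).mp (Nat.le_ceil _)
    have hfx : f x ≤ (n : ℝ) * f y := by
      have := hsub x hx (List.replicate n y)
        (by simp [hnpos.ne']) (by intro z hz; simp_all [List.eq_of_mem_replicate hz]) hxle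
      simpa [List.map_replicate, List.sum_replicate, nsmul_eq_mul] using this
    have hceil : (n : ℝ) < x / y + 1 := Nat.ceil_lt_add_one (div_pos hx0 hy0).le
    have hfy : 0 ≤ f y := hfnonneg y hyA
    rw [div_le_div_iff₀ (by positivity) hy0]
    nlinarith [div_mul_cancel₀ x hy0.ne', mul_le_mul_of_nonneg_right hfx hy0.le,
      mul_le_mul_of_nonneg_right hceil.le (mul_nonneg hfy hy0.le)]
  -- liminf comparison
  have hmono : Filter.liminf (fun y => ENNReal.ofReal (f x / (x + y))) F ≤ diniLower f A 0 := by
    refine Filter.liminf_le_liminf ?_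
    filter_upwards [self_mem_nhdsWithin] with y hy
    simp only [hf0, sub_zero]
    exact ENNReal.ofReal_le_ofReal (key y hy)
  have htend : Filter.Tendsto (fun y => ENNReal.ofReal (f x / (x + y))) F
      (nhds (ENNReal.ofReal (f x / x))) := by
    have h1 : Filter.Tendsto (fun y => f x / (x + y)) (nhds (0:ℝ)) (nhds (f x / x)) := by
      have : ContinuousAt (fun y => f x / (x + y)) 0 := by
        apply ContinuousAt.div continuousAt_const
          ((continuous_const.add continuous_id).continuousAt)
        simpa using hx0.ne'
      simpa using this.tendsto
    exact (ENNReal.continuous_ofReal.tendsto _).comp (h1.mono_left nhdsWithin_le_nhds)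
  have hliminf : Filter.liminf (fun y => ENNReal.ofReal (f x / (x + y))) F
      = ENNReal.ofReal (f x / x) := htend.liminf_eq
  have hL : ENNReal.ofReal (f x / x) ≤ diniLower f A 0 := hliminf ▸ hmono
  calc ENNReal.ofReal (f x) = ENNReal.ofReal (f x / x * x) := by
        rw [div_mul_cancel₀ _ hx0.ne']
    _ = ENNReal.ofReal (f x / x) * ENNReal.ofReal x :=
        ENNReal.ofReal_mul (div_nonneg (hfnonneg x hx) hx0.le)
    _ ≤ diniLower f A 0 * ENNReal.ofReal x := mul_le_mul_left hL _
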